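/- Let (𝔤, 𝔥, 𝔫) be a tame triplet and ρ an induced-type 𝔤-module structure on U(𝔫_α). Then for every k-vector space V equipped with a Lie algebra homomorphism ρ_V : 𝔤 → End_k(V), the map f ↦ f(1) is a bijection from the set of k-linear maps f : U(𝔫_α) → V satisfying f(ρ(a)(u)) = ρ_V(a)(f(u)) for all a ∈ 𝔤 and u ∈ U(𝔫_α), onto the set {v ∈ V : ρ_V(h)(v) = 0 for all h ∈ 𝔥}. In other words, U(𝔫_α) realizes the induced 𝔤-module Ind_𝔥^𝔤 k of the trivial 𝔥-module k. -/

import Mathlib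

open UniversalEnvelopingAlgebra

/-- Induction principle for the universal enveloping algebra. -/
theorem uea_induction (k : Type*) [CommRing k] (M : Type*) [LieRing M] [LieAlgebra k M]
    {C : UniversalEnvelopingAlgebra k M → Prop}
    (halg : ∀ r : k, C (algebraMap k _ r))
    (hι : ∀ x : M, C (ι k x))
    (hmul : ∀ a b, C a → C b → C (a * b))
    (hadd : ∀ a b, C a → C b → C (a + b)) :
    ∀ u, C u := by
  intro u
  obtain ⟨t, rfl⟩ : ∃ t, mkAlgHom k M t = u := RingCon.mkₐ_surjective _ u
  refine TensorAlgebra.induction (C := fun t => C (mkAlgHom k M t)) ?_ ?_ ?_ ?_ t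
  · intro r; rw [AlgHom.commutes]; exact halg r
  · intro x; exact hι x
  · intro a b ha hb; rw [map_mul]; exact hmul _ _ ha hb
  · intro a b ha hb; rw [map_add]; exact hadd _ _ ha hb

/-- A submodule of the UEA containing 1 and stable under left multiplication by `ι m`
is everything. -/
theorem uea_span (k : Type*) [CommRing k] (M : Type*) [LieRing M] [LieAlgebra k M]
    (T : Submodule k (UniversalEnvelopingAlgebra k M))
    (h1 : (1 : UniversalEnvelopingAlgebra k M) ∈ T)
    (hmul : ∀ (m : M) u, u ∈ T → ι k m * u ∈ T) :
    ∀ u, u ∈ T := by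
  have key : ∀ u : UniversalEnvelopingAlgebra k M, ∀ w ∈ T, u * w ∈ T := by
    refine uea_induction k M ?_ ?_ ?_ ?_
    · intro r w hw
      rw [← Algebra.smul_def]
      exact T.smul_mem r hw
    · intro x w hw; exact hmul x w hw
    · intro a b ha hb w hw
      rw [mul_assoc]; exact ha _ (hb w hw)
    · intro a b ha hb w hw
      rw [add_mul]; exact T.add_mem (ha w hw) (hb w hw)
  intro u
  simpa using key u 1 h1

attribute [local instance 100] LieRing.ofAssociativeRing

/-- Let `(L, H, N)` be a tame triplet (notation as in Statement 9), `M` a Lie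
algebra realizing `N` with the bracket `α` (as in Statement 11), and `ρ` an induced-type
`L`-module structure on `U(M)`.  Then for every `k`-vector space `V` with a Lie algebra
homomorphism `ρV : L → End_k(V)`, the map `f ↦ f(1)` is a bijection from the set of
`L`-equivariant `k`-linear maps `f : U(M) → V` onto the set `{v ∈ V : ρV(h)(v) = 0 ∀ h ∈ H}`:
`U(M)` realizes the induced module `Ind_H^L k` of the trivial `H`-module. -/
theorem stmt_12 (k : Type*) [Field k] [CharZero k] (L : Type*) [LieRing L] [LieAlgebra k L]
    (H : LieSubalgebra k L) (N : Submodule k L)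
    (hcompl : IsCompl H.toSubmodule N)
    (πH πN : L →ₗ[k] L)
    (hπH : ∀ x : L, πH x ∈ H) (hπN : ∀ x : L, πN x ∈ N)
    (hsum : ∀ x : L, πH x + πN x = x)
    (hHN : ∀ h ∈ H, ∀ x ∈ N, ⁅h, x⁆ ∈ N)
    (htame : ∀ x ∈ N, ∀ y ∈ N, ∀ z ∈ N, ⁅πH ⁅x, y⁆, z⁆ = (0 : L))
    (M : Type*) [LieRing M] [LieAlgebra k M]
    (incl : M →ₗ[k] L) (hinj : Function.Injective incl)
    (hrange : LinearMap.range incl = N)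
    (hbr : ∀ a b : M, incl ⁅a, b⁆ = πN ⁅incl a, incl b⁆)
    (ρ : L →ₗ⁅k⁆ Module.End k (UniversalEnvelopingAlgebra k M))
    (hρ₁ : ∀ (a : M) (u : UniversalEnvelopingAlgebra k M),
      ρ (incl a) u = UniversalEnvelopingAlgebra.ι k a * u)
    (hρ₂ : ∀ h ∈ H, ρ h (1 : UniversalEnvelopingAlgebra k M) = 0)
    (hρ₃ : ∀ h ∈ H, ∀ u v : UniversalEnvelopingAlgebra k M,
      ρ h (u * v) = ρ h u * v + u * ρ h v)
    (hρ₄ : ∀ h ∈ H, ∀ a b : M, incl b = πN ⁅h, incl a⁆ →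
      ρ h (UniversalEnvelopingAlgebra.ι k a) = UniversalEnvelopingAlgebra.ι k b)
    (V : Type*) [AddCommGroup V] [Module k V]
    (ρV : L →ₗ⁅k⁆ Module.End k V) :
    (∀ f : UniversalEnvelopingAlgebra k M →ₗ[k] V,
        (∀ (a : L) (u : UniversalEnvelopingAlgebra k M), f (ρ a u) = ρV a (f u)) →
        ∀ h ∈ H, ρV h (f 1) = 0) ∧
    (∀ f g : UniversalEnvelopingAlgebra k M →ₗ[k] V,
        (∀ (a : L) (u : UniversalEnvelopingAlgebra k M), f (ρ a u) = ρV a (f u)) →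
        (∀ (a : L) (u : UniversalEnvelopingAlgebra k M), g (ρ a u) = ρV a (g u)) →
        f 1 = g 1 → f = g) ∧
    (∀ v : V, (∀ h ∈ H, ρV h v = 0) →
        ∃ f : UniversalEnvelopingAlgebra k M →ₗ[k] V,
          (∀ (a : L) (u : UniversalEnvelopingAlgebra k M), f (ρ a u) = ρV a (f u)) ∧
          f 1 = v) := by

  classical
  -- πN is the identity on N
  have hπN_id : ∀ x ∈ N, πN x = x := by
    intro x hx
    have h2 : πH x ∈ N := by
      have hs := hsum x
      have hx' : πH x = x - πN x := eq_sub_of_add_eq hs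
      rw [hx']
      exact N.sub_mem hx (hπN x)
    have h0 : πH x = 0 :=
      (Submodule.disjoint_def.mp hcompl.disjoint) _ (hπH x) h2
    have hs := hsum x
    rw [h0, zero_add] at hs
    exact hs
  have hmemN : ∀ m : M, incl m ∈ N := by
    intro m; rw [← hrange]; exact LinearMap.mem_range_self _ m
  refine ⟨?_, ?_, ?_⟩
  · -- Part 1
    intro f hf h hh
    have := hf h 1
    rw [hρ₂ h hh, map_zero] at this
    exact this.symm
  · -- Part 2: uniqueness
    intro f g hf hg h1
    have key : ∀ u, u ∈ LinearMap.ker (f - g) := by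
      refine uea_span k M _ ?_ ?_
      · simp [LinearMap.mem_ker, h1]
      · intro m u hu
        simp only [LinearMap.mem_ker, LinearMap.sub_apply] at hu ⊢
        have hu' : f u = g u := sub_eq_zero.mp hu
        rw [← hρ₁ m u, hf, hg, hu', sub_self]
    ext u
    have := key u
    simp only [LinearMap.mem_ker, LinearMap.sub_apply] at this
    exact sub_eq_zero.mp this
  · -- Part 3: existence
    intro v hv
    have hcommL : ∀ (a b m : M),
        ρV (πH ⁅incl a, incl b⁆) ∘ₗ ρV (incl m) = ρV (incl m) ∘ₗ ρV (πH ⁅incl a, incl b⁆) := by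
      intro a b m
      have hz : ⁅πH ⁅incl a, incl b⁆, incl m⁆ = (0 : L) :=
        htame _ (hmemN a) _ (hmemN b) _ (hmemN m)
      have hml := ρV.map_lie (x := πH ⁅incl a, incl b⁆) (y := incl m)
      rw [hz, map_zero, Ring.lie_def] at hml
      have heq := sub_eq_zero.mp hml.symm
      calc ρV (πH ⁅incl a, incl b⁆) ∘ₗ ρV (incl m)
          = ρV (πH ⁅incl a, incl b⁆) * ρV (incl m) := rfl
        _ = ρV (incl m) * ρV (πH ⁅incl a, incl b⁆) := heq
        _ = ρV (incl m) ∘ₗ ρV (πH ⁅incl a, incl b⁆) := rfl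
    let V₀ : Submodule k V :=
      { carrier := { x | ∀ a b : M, ρV (πH ⁅incl a, incl b⁆) x = 0 }
        add_mem' := by
          intro x y hx hy a b
          simp only [Set.mem_setOf_eq] at hx hy
          rw [map_add, hx a b, hy a b, add_zero]
        zero_mem' := by intro a b; simp
        smul_mem' := by
          intro c x hx a b
          simp only [Set.mem_setOf_eq] at hx
          rw [map_smul, hx a b, smul_zero] }
    have hv₀ : v ∈ V₀ := fun a b => hv _ (hπH _)
    have hstab : ∀ (m : M), ∀ x ∈ V₀, ρV (incl m) x ∈ V₀ := by
      intro m x hx a b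
      have hc := congrArg (fun φ : V →ₗ[k] V => φ x) (hcommL a b m)
      simp only [LinearMap.comp_apply] at hc
      rw [hc, hx a b, map_zero]
    have hNsplit : ∀ x ∈ V₀, ∀ a b : M,
        ρV (πN ⁅incl a, incl b⁆) x = ρV ⁅incl a, incl b⁆ x := by
      intro x hx a b
      conv_rhs => rw [← hsum ⁅incl a, incl b⁆]
      rw [map_add, LinearMap.add_apply, hx a b, zero_add]
    let g : M →ₗ⁅k⁆ Module.End k V₀ :=
      { toFun := fun m => (ρV (incl m)).restrict (hstab m)
        map_add' := by
          intro a b; ext x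
          simp [LinearMap.restrict_apply, map_add]
        map_smul' := by
          intro c a; ext x
          simp [LinearMap.restrict_apply, map_smul]
        map_lie' := by
          intro a b
          ext x
          show (((ρV (incl ⁅a, b⁆)).restrict (hstab _) x : V₀) : V) = _
          have hlhs : (((ρV (incl ⁅a, b⁆)).restrict (hstab _) x : V₀) : V)
              = ρV (incl ⁅a, b⁆) (x : V) := rfl
          have hrhs : (((⁅(ρV (incl a)).restrict (hstab a),
              (ρV (incl b)).restrict (hstab b)⁆ : Module.End k V₀) x : V₀) : V)
              = ρV (incl a) (ρV (incl b) (x : V)) - ρV (incl b) (ρV (incl a) (x : V)) := by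
            rw [Ring.lie_def]; rfl
          rw [hlhs, hrhs]
          have hml := ρV.map_lie (x := incl a) (y := incl b)
          have h2 : ρV ⁅incl a, incl b⁆ (x : V)
              = ρV (incl a) (ρV (incl b) (x : V)) - ρV (incl b) (ρV (incl a) (x : V)) := by
            rw [hml, Ring.lie_def]; rfl
          rw [hbr a b, hNsplit x x.2 a b, h2] }
    have hg_apply : ∀ (m : M) (x : V₀), ((g m x : V₀) : V) = ρV (incl m) (x : V) :=
      fun m x => rfl
    let σ : UniversalEnvelopingAlgebra k M →ₐ[k] Module.End k V₀ :=
      UniversalEnvelopingAlgebra.lift k g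
    let f : UniversalEnvelopingAlgebra k M →ₗ[k] V :=
      { toFun := fun u => ((σ u ⟨v, hv₀⟩ : V₀) : V)
        map_add' := by intro u w; simp
        map_smul' := by intro c u; simp }
    have hf_apply : ∀ u, f u = ((σ u ⟨v, hv₀⟩ : V₀) : V) := fun u => rfl
    have hf1 : f 1 = v := by
      rw [hf_apply, map_one]; rfl
    have hfN : ∀ (m : M) (u : UniversalEnvelopingAlgebra k M),
        f (UniversalEnvelopingAlgebra.ι k m * u) = ρV (incl m) (f u) := by
      intro m u
      rw [hf_apply, hf_apply, map_mul]
      show ((σ (UniversalEnvelopingAlgebra.ι k m) (σ u ⟨v, hv₀⟩) : V₀) : V) = _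
      rw [show σ (UniversalEnvelopingAlgebra.ι k m) = g m from
        UniversalEnvelopingAlgebra.lift_ι_apply k g m]
      exact hg_apply m _
    have hfH : ∀ u : UniversalEnvelopingAlgebra k M, ∀ h ∈ H, f (ρ h u) = ρV h (f u) := by
      have key : ∀ u, u ∈
          ({ carrier := { u | ∀ h ∈ H, f (ρ h u) = ρV h (f u) }
             add_mem' := by
               intro x y hx hy h hh
               simp only [Set.mem_setOf_eq] at hx hy
               simp only [map_add]
               rw [hx h hh, hy h hh]
             zero_mem' := by intro h hh; simp
             smul_mem' := by
               intro c x hx h hh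
               simp only [Set.mem_setOf_eq] at hx
               simp only [map_smul]
               rw [hx h hh] } :
            Submodule k (UniversalEnvelopingAlgebra k M)) := by
        refine uea_span k M _ ?_ ?_
        · intro h hh
          rw [hρ₂ h hh, map_zero, hf1, hv h hh]
        · intro m u hu h hh
          replace hu : ∀ h ∈ H, f (ρ h u) = ρV h (f u) := hu
          have hbN : ⁅h, incl m⁆ ∈ N := hHN h hh _ (hmemN m)
          have hbfix : πN ⁅h, incl m⁆ = ⁅h, incl m⁆ := hπN_id _ hbN
          obtain ⟨m', hm'⟩ : ∃ m', incl m' = ⁅h, incl m⁆ := by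
            rw [← hrange] at hbN; exact hbN
          have hρι : ρ h (UniversalEnvelopingAlgebra.ι k m)
              = UniversalEnvelopingAlgebra.ι k m' :=
            hρ₄ h hh m m' (by rw [hm', hbfix])
          have hL : f (ρ h (UniversalEnvelopingAlgebra.ι k m * u))
              = ρV ⁅h, incl m⁆ (f u) + ρV (incl m) (ρV h (f u)) := by
            rw [hρ₃ h hh, map_add, hρι, hfN, hfN, hm', hu h hh]
          have hml := ρV.map_lie (x := h) (y := incl m)
          rw [hL, hml, Ring.lie_def]
          show _ = ρV h (f (UniversalEnvelopingAlgebra.ι k m * u))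
          rw [hfN]
          show (ρV h * ρV (incl m) - ρV (incl m) * ρV h) (f u)
              + ρV (incl m) (ρV h (f u)) = ρV h (ρV (incl m) (f u))
          simp only [LinearMap.sub_apply, Module.End.mul_apply]
          abel
      intro u h hh
      exact key u h hh
    refine ⟨f, ?_, hf1⟩
    intro a u
    obtain ⟨m, hm⟩ : ∃ m, incl m = πN a := by
      have := hπN a; rw [← hrange] at this; exact this
    have hsplit : ρ a u = ρ (πH a) u + ρ (πN a) u := by
      conv_lhs => rw [← hsum a]
      rw [map_add]; rfl
    have hsplitV : ρV a (f u) = ρV (πH a) (f u) + ρV (πN a) (f u) := by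
      conv_lhs => rw [← hsum a]
      rw [map_add]; rfl
    rw [hsplit, map_add, hfH u _ (hπH a), hsplitV]
    congr 1
    rw [← hm, hρ₁ m u, hfN, hm]
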